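/- Let K be a field with two field topologies τ₁ and τ₂. Then τ₁ and τ₂ are independent (every nonempty τ₁-open set meets every nonempty τ₂-open set) if and only if for every τ₁-neighborhood U of 0 and every τ₂-neighborhood V of 0, we have 1 ∈ U + V. -/

import Mathlib

lemma aux_cont_affine {K : Type*} [Field K] [TopologicalSpace K] [IsTopologicalRing K]
    (c a : K) : Continuous (fun x : K => c * x + a) :=
  (continuous_const.mul continuous_id).add continuous_const

theorem stmt_14 (K : Type*) [Field K] (τ₁ τ₂ : TopologicalSpace K)
    (hring₁ : @IsTopologicalRing K τ₁ _) (hring₂ : @IsTopologicalRing K τ₂ _)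
    (hinv₁ : ∀ x : K, x ≠ 0 → @ContinuousAt K K τ₁ τ₁ (fun y => y⁻¹) x)
    (hinv₂ : ∀ x : K, x ≠ 0 → @ContinuousAt K K τ₂ τ₂ (fun y => y⁻¹) x)
    (ht2₁ : @T2Space K τ₁) (ht2₂ : @T2Space K τ₂)
    (hnd₁ : τ₁ ≠ ⊥) (hnd₂ : τ₂ ≠ ⊥) :
    (∀ U V : Set K, @IsOpen K τ₁ U → @IsOpen K τ₂ V → U.Nonempty → V.Nonempty →
        (U ∩ V).Nonempty) ↔
    (∀ U ∈ @nhds K τ₁ 0, ∀ V ∈ @nhds K τ₂ 0, ∃ u ∈ U, ∃ v ∈ V, u + v = 1) := by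
  constructor
  · intro h U hU V hV
    obtain ⟨U', hU'sub, hU'open, hU'0⟩ := (@mem_nhds_iff K τ₁ 0 U).mp hU
    obtain ⟨V', hV'sub, hV'open, hV'0⟩ := (@mem_nhds_iff K τ₂ 0 V).mp hV
    have hcont : @Continuous K K τ₂ τ₂ (fun x : K => (-1) * x + 1) :=
      @aux_cont_affine K _ τ₂ hring₂ (-1) 1
    have hW : @IsOpen K τ₂ ((fun x : K => (-1) * x + 1) ⁻¹' V') :=
      @IsOpen.preimage K K τ₂ τ₂ _ hcont V' hV'open
    obtain ⟨x, hxU, hxW⟩ := h U' _ hU'open hW ⟨0, hU'0⟩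
      ⟨1, by simpa using hV'0⟩
    exact ⟨x, hU'sub hxU, (-1) * x + 1, hV'sub hxW, by ring⟩
  · intro h U V hUopen hVopen ⟨a, ha⟩ ⟨b, hb⟩
    by_cases hab : b - a = 0
    · exact ⟨a, ha, by rwa [sub_eq_zero.mp hab] at hb⟩
    · set c := b - a with hc
      have hcont₁ : @Continuous K K τ₁ τ₁ (fun x : K => c * x + a) :=
        @aux_cont_affine K _ τ₁ hring₁ c a
      have hcont₂ : @Continuous K K τ₂ τ₂ (fun x : K => (-c) * x + b) :=
        @aux_cont_affine K _ τ₂ hring₂ (-c) b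
      have hU₀ : (fun x : K => c * x + a) ⁻¹' U ∈ @nhds K τ₁ 0 := by
        apply @IsOpen.mem_nhds K τ₁ 0 _
          (@IsOpen.preimage K K τ₁ τ₁ _ hcont₁ U hUopen)
        simpa using ha
      have hV₀ : (fun x : K => (-c) * x + b) ⁻¹' V ∈ @nhds K τ₂ 0 := by
        apply @IsOpen.mem_nhds K τ₂ 0 _
          (@IsOpen.preimage K K τ₂ τ₂ _ hcont₂ V hVopen)
        simpa using hb
      obtain ⟨u, hu, v, hv, huv⟩ := h _ hU₀ _ hV₀
      refine ⟨c * u + a, hu, ?_⟩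
      have : c * u + a = (-c) * v + b := by
        have : c * (u + v) = c := by rw [huv, mul_one]
        rw [hc]; ring_nf; linear_combination this
      rw [this]; exact hv
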